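/- arXiv:1610.00858 — 2 statements merged into one kernel-verified Lean document; each statement's English description precedes it below -/
import Mathlib

section
/- For every k ∈ ω and all m, n with 3 ≤ m, n ≤ ω, the poset P_k is not (m,n)-representable. -/
open Cardinal

universe u

/-- A field of sets: a collection of subsets of `X` closed under finite unions,
finite intersections, and complements. -/
def IsFieldOfSets {X : Type u} (F : Set (Set X)) : Prop :=
  ∅ ∈ F ∧ Set.univ ∈ F ∧ (∀ A ∈ F, ∀ B ∈ F, A ∪ B ∈ F) ∧
    (∀ A ∈ F, ∀ B ∈ F, A ∩ B ∈ F) ∧ (∀ A ∈ F, Aᶜ ∈ F)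

/-- A poset `P` is `(α,β)`-representable if there is a field of sets `F` and an
injective map `h : P → F` preserving all existing meets of sets of cardinality `< α`
and all existing joins of sets of cardinality `< β`. -/
def IsRepresentable (α β : Cardinal.{u}) (P : Type u) [PartialOrder P] : Prop :=
  ∃ (X : Type u) (F : Set (Set X)) (h : P → Set X),
    IsFieldOfSets F ∧ (∀ p : P, h p ∈ F) ∧ Function.Injective h ∧
    (∀ S : Set P, #S < α → ∀ a : P, IsGLB S a → h a = ⋂ s ∈ S, h s) ∧
    (∀ T : Set P, #T < β → ∀ a : P, IsLUB T a → h a = ⋃ t ∈ T, h t)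

/-- The levels `N n`: `N 0` has four elements (`a`, `b`, `c`, `d`), and `N (n+1)` has one
element `e_{xy}` for each unordered pair of distinct elements `x`, `y` of `N n`. -/
def N : ℕ → Type
  | 0 => Fin 4
  | n + 1 => { s : Sym2 (N n) // ¬s.IsDiag }

/-- The element `e_{xy}` of `N (n+1)` corresponding to distinct `x y : N n`. -/
def mkE {n : ℕ} (x y : N n) (h : x ≠ y) : N (n + 1) :=
  ⟨s(x, y), by simp [h]⟩

/-- The carrier of the poset `P_k`: the elements `p`, `q`, the elements of `N n` for
`n ≤ k` (constructor `node`), and two elements `x'` (constructor `prime`) and `x''`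
(constructor `dprime`) for every element `x` of `N n` with `n ≤ k`. -/
inductive Elt (k : ℕ) : Type
  | p : Elt k
  | q : Elt k
  | node (n : ℕ) (hn : n ≤ k) (x : N n) : Elt k
  | prime (n : ℕ) (hn : n ≤ k) (x : N n) : Elt k
  | dprime (n : ℕ) (hn : n ≤ k) (x : N n) : Elt k

/-- The order on `P_k`: (1) `x < p` for `x ∈ N₀`; (2) `x < x'` and `x < x''` for
`x ∈ N_n`, `n ≤ k`; (3) `e_{xy} < x', x'', y', y''` for `e_{xy} ∈ N_{n+1}`, `n + 1 ≤ k`;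
(4) `q < x'` and `q < x''` for `x ∈ N_k`; (5) reflexivity; and nothing else. -/
inductive Le (k : ℕ) : Elt k → Elt k → Prop
  | refl (x : Elt k) : Le k x x
  | node_p (h0 : 0 ≤ k) (x : N 0) : Le k (.node 0 h0 x) .p
  | node_prime (n : ℕ) (hn : n ≤ k) (x : N n) : Le k (.node n hn x) (.prime n hn x)
  | node_dprime (n : ℕ) (hn : n ≤ k) (x : N n) : Le k (.node n hn x) (.dprime n hn x)
  | e_prime (n : ℕ) (hn : n + 1 ≤ k) (e : N (n + 1)) (x : N n) (hx : x ∈ e.1) :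
      Le k (.node (n + 1) hn e) (.prime n (Nat.le_of_succ_le hn) x)
  | e_dprime (n : ℕ) (hn : n + 1 ≤ k) (e : N (n + 1)) (x : N n) (hx : x ∈ e.1) :
      Le k (.node (n + 1) hn e) (.dprime n (Nat.le_of_succ_le hn) x)
  | q_prime (x : N k) : Le k .q (.prime k le_rfl x)
  | q_dprime (x : N k) : Le k .q (.dprime k le_rfl x)

lemma Le.eq_of_le_node {k n : ℕ} {x : Elt k} {hn : n ≤ k} {w : N n}
    (h : Le k x (Elt.node n hn w)) : x = Elt.node n hn w := by
  cases h; rfl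

lemma Le.eq_of_le_q {k : ℕ} {x : Elt k} (h : Le k x Elt.q) : x = Elt.q := by
  cases h; rfl

lemma Le.left_cases {k : ℕ} {x y : Elt k} (h : Le k x y) :
    x = y ∨ (∃ n hn w, x = Elt.node n hn w) ∨ x = Elt.q := by
  cases h with
  | refl => exact Or.inl rfl
  | node_p h0 w => exact Or.inr (Or.inl ⟨_, _, _, rfl⟩)
  | node_prime n hn w => exact Or.inr (Or.inl ⟨_, _, _, rfl⟩)
  | node_dprime n hn w => exact Or.inr (Or.inl ⟨_, _, _, rfl⟩)
  | e_prime n hn e w hw => exact Or.inr (Or.inl ⟨_, _, _, rfl⟩)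
  | e_dprime n hn e w hw => exact Or.inr (Or.inl ⟨_, _, _, rfl⟩)
  | q_prime w => exact Or.inr (Or.inr rfl)
  | q_dprime w => exact Or.inr (Or.inr rfl)

/-- `P_k` as a partial order, with order relation `Le k`. -/
instance EltPartialOrder (k : ℕ) : PartialOrder (Elt k) where
  le := Le k
  le_refl := Le.refl
  le_trans := by
    intro x y z h1 h2
    rcases h2.left_cases with rfl | ⟨n, hn, w, rfl⟩ | rfl
    · exact h1
    · rw [h1.eq_of_le_node]; exact h2
    · rw [h1.eq_of_le_q]; exact h2
  le_antisymm := by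
    intro x y h1 h2
    rcases h1.left_cases with rfl | ⟨n, hn, w, rfl⟩ | rfl
    · rfl
    · exact (h2.eq_of_le_node).symm
    · exact (h2.eq_of_le_q).symm

open Elt in
lemma inv_le_p {k : ℕ} {b : Elt k} (h : Le k b Elt.p) :
    b = Elt.p ∨ ∃ (h0 : 0 ≤ k) (x : N 0), b = Elt.node 0 h0 x := by
  cases h with
  | refl => exact Or.inl rfl
  | node_p h0 x => exact Or.inr ⟨h0, x, rfl⟩

lemma inv_le_prime {k n : ℕ} {hn : n ≤ k} {x : N n} {b : Elt k} (h : Le k b (Elt.prime n hn x)) :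
    b = Elt.prime n hn x ∨ b = Elt.node n hn x ∨
      (∃ (h1 : n + 1 ≤ k) (e : N (n + 1)), x ∈ e.1 ∧ b = Elt.node (n + 1) h1 e) ∨
      (n = k ∧ b = Elt.q) := by
  cases h with
  | refl => exact Or.inl rfl
  | node_prime n hn x => exact Or.inr (Or.inl rfl)
  | e_prime n hn e x hx => exact Or.inr (Or.inr (Or.inl ⟨hn, e, hx, rfl⟩))
  | q_prime x => exact Or.inr (Or.inr (Or.inr ⟨rfl, rfl⟩))
lemma inv_le_dprime {k n : ℕ} {hn : n ≤ k} {x : N n} {b : Elt k} (h : Le k b (Elt.dprime n hn x)) :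
    b = Elt.dprime n hn x ∨ b = Elt.node n hn x ∨
      (∃ (h1 : n + 1 ≤ k) (e : N (n + 1)), x ∈ e.1 ∧ b = Elt.node (n + 1) h1 e) ∨
      (n = k ∧ b = Elt.q) := by
  cases h with
  | refl => exact Or.inl rfl
  | node_dprime n hn x => exact Or.inr (Or.inl rfl)
  | e_dprime n hn e x hx => exact Or.inr (Or.inr (Or.inl ⟨hn, e, hx, rfl⟩))
  | q_dprime x => exact Or.inr (Or.inr (Or.inr ⟨rfl, rfl⟩))

lemma inv_node0_le {k : ℕ} {h0 : 0 ≤ k} {x : N 0} {c : Elt k} (h : Le k (Elt.node 0 h0 x) c) :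
    c = Elt.node 0 h0 x ∨ c = Elt.p ∨ c = Elt.prime 0 h0 x ∨ c = Elt.dprime 0 h0 x := by
  cases h with
  | refl => exact Or.inl rfl
  | node_p h0 x => exact Or.inr (Or.inl rfl)
  | node_prime n hn x => exact Or.inr (Or.inr (Or.inl rfl))
  | node_dprime n hn x => exact Or.inr (Or.inr (Or.inr rfl))

lemma isGLB_pair_of_le {P : Type*} [PartialOrder P] {a b : P} (h : a ≤ b) :
    IsGLB {a, b} a :=
  ⟨by rintro c (rfl | rfl); exact le_rfl; exact h, fun c hc => hc (Set.mem_insert _ _)⟩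
lemma node_inj {k n : ℕ} {hn hn' : n ≤ k} {x y : N n}
    (h : (Elt.node n hn x : Elt k) = Elt.node n hn' y) : x = y := by
  injection h

lemma glb_p_prime {k : ℕ} (h0 : 0 ≤ k) (x : N 0) :
    IsGLB {Elt.p, Elt.prime 0 h0 x} (Elt.node 0 h0 x : Elt k) := by
  constructor
  · rintro c (rfl | rfl)
    · exact Le.node_p h0 x
    · exact Le.node_prime 0 h0 x
  · intro b hb
    have h1 : Le k b Elt.p := hb (Set.mem_insert _ _)
    have h2 : Le k b (Elt.prime 0 h0 x) := hb (Set.mem_insert_of_mem _ rfl)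
    rcases inv_le_p h1 with rfl | ⟨h0', y, rfl⟩
    · rcases inv_le_prime h2 with h | h | ⟨h1', e, he, h⟩ | ⟨_, h⟩ <;> simp_all
    · rcases inv_le_prime h2 with h | h | ⟨h1', e, he, h⟩ | ⟨_, h⟩
      · simp_all
      · rw [node_inj h]
      · simp_all
      · simp_all
lemma mk_pair_lt {P : Type} (u v : P) {m : Cardinal.{0}} (hm : 3 ≤ m) : #({u,v} : Set P) < m := by
  have h1 : #({u,v} : Set P) ≤ 2 := by
    apply le_trans (Cardinal.mk_insert_le)
    rw [Cardinal.mk_singleton]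
    norm_num
  have h2 : (2:Cardinal) < 3 := by
    have := (Nat.cast_lt (α := Cardinal.{0})).mpr (by norm_num : (2:ℕ) < 3)
    simpa using this
  exact lt_of_le_of_lt h1 (lt_of_lt_of_le h2 hm)
lemma prime_inj {k n : ℕ} {hn hn' : n ≤ k} {x y : N n}
    (h : (Elt.prime n hn x : Elt k) = Elt.prime n hn' y) : x = y := by injection h

lemma eq_mkE {n : ℕ} {e : N (n+1)} {x y : N n} (hxy : x ≠ y) (hx : x ∈ e.1) (hy : y ∈ e.1) :
    e = mkE x y hxy := Subtype.ext ((Sym2.mem_and_mem_iff hxy).mp ⟨hx, hy⟩)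

lemma mem_mkE_left {n : ℕ} (x y : N n) (h : x ≠ y) : x ∈ (mkE x y h).1 := Sym2.mem_mk_left x y
lemma mem_mkE_right {n : ℕ} (x y : N n) (h : x ≠ y) : y ∈ (mkE x y h).1 := Sym2.mem_mk_right x y

lemma glb_p_dprime {k : ℕ} (h0 : 0 ≤ k) (x : N 0) :
    IsGLB {Elt.p, Elt.dprime 0 h0 x} (Elt.node 0 h0 x : Elt k) := by
  constructor
  · rintro c (rfl | rfl)
    · exact Le.node_p h0 x
    · exact Le.node_dprime 0 h0 x
  · intro b hb
    have h1 : Le k b Elt.p := hb (Set.mem_insert _ _)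
    have h2 : Le k b (Elt.dprime 0 h0 x) := hb (Set.mem_insert_of_mem _ rfl)
    rcases inv_le_p h1 with rfl | ⟨h0', y, rfl⟩
    · rcases inv_le_dprime h2 with h | h | ⟨h1', e, he, h⟩ | ⟨_, h⟩ <;> simp_all
    · rcases inv_le_dprime h2 with h | h | ⟨h1', e, he, h⟩ | ⟨_, h⟩
      · simp_all
      · rw [node_inj h]
      · simp_all
      · simp_all

lemma glb_prime_prime_e {k n : ℕ} (h1 : n + 1 ≤ k) {x y : N n} (hxy : x ≠ y) :
    IsGLB {Elt.prime n (Nat.le_of_succ_le h1) x, Elt.prime n (Nat.le_of_succ_le h1) y}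
      (Elt.node (n+1) h1 (mkE x y hxy) : Elt k) := by
  constructor
  · rintro c (rfl | rfl)
    · exact Le.e_prime n h1 _ x (mem_mkE_left x y hxy)
    · exact Le.e_prime n h1 _ y (mem_mkE_right x y hxy)
  · intro b hb
    have ha : Le k b (Elt.prime n _ x) := hb (Set.mem_insert _ _)
    have hc : Le k b (Elt.prime n _ y) := hb (Set.mem_insert_of_mem _ rfl)
    rcases inv_le_prime ha with rfl | rfl | ⟨h1', e, he, rfl⟩ | ⟨hk, rfl⟩
    · rcases inv_le_prime hc with h | h | ⟨h1', e, he, h⟩ | ⟨_, h⟩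
      · exact absurd (prime_inj h) hxy
      · simp_all
      · simp_all
      · simp_all
    · rcases inv_le_prime hc with h | h | ⟨h1', e, he, h⟩ | ⟨_, h⟩
      · simp_all
      · exact absurd (node_inj h) hxy
      · exfalso; injection h with h'; omega
      · simp_all
    · rcases inv_le_prime hc with h | h | ⟨h1'', e', he', h⟩ | ⟨_, h⟩
      · simp_all
      · exfalso; injection h with h'; omega
      · have : e = e' := node_inj h
        subst this
        rw [eq_mkE hxy he he']
      · simp_all
    · omega
lemma glb_prime_eprime {k n : ℕ} (h1 : n + 1 ≤ k) {v : N n} {e : N (n+1)} (hv : v ∈ e.1) :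
    IsGLB {Elt.prime n (Nat.le_of_succ_le h1) v, Elt.prime (n+1) h1 e}
      (Elt.node (n+1) h1 e : Elt k) := by
  constructor
  · rintro c (rfl | rfl)
    · exact Le.e_prime n h1 e v hv
    · exact Le.node_prime (n+1) h1 e
  · intro b hb
    have ha : Le k b (Elt.prime n _ v) := hb (Set.mem_insert _ _)
    have hc : Le k b (Elt.prime (n+1) h1 e) := hb (Set.mem_insert_of_mem _ rfl)
    rcases inv_le_prime hc with rfl | rfl | ⟨h2, f, hf, rfl⟩ | ⟨hk, rfl⟩
    · rcases inv_le_prime ha with h | h | ⟨h2, f, hf, h⟩ | ⟨_, h⟩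
      · exfalso; injection h with h'; omega
      · simp_all
      · simp_all
      · simp_all
    · exact Le.refl _
    · rcases inv_le_prime ha with h | h | ⟨h2', f', hf', h⟩ | ⟨_, h⟩
      · simp_all
      · exfalso; injection h with h'; omega
      · exfalso; injection h with h'; omega
      · simp_all
    · rcases inv_le_prime ha with h | h | ⟨h2, f, hf, h⟩ | ⟨hk', h⟩ <;> [skip; skip; skip; skip] <;>
        first
        | (exfalso; omega)
        | simp_all
        | (exfalso; injection h with h'; omega)
lemma glb_prime_edprime {k n : ℕ} (h1 : n + 1 ≤ k) {v : N n} {e : N (n+1)} (hv : v ∈ e.1) :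
    IsGLB {Elt.prime n (Nat.le_of_succ_le h1) v, Elt.dprime (n+1) h1 e}
      (Elt.node (n+1) h1 e : Elt k) := by
  constructor
  · rintro c (rfl | rfl)
    · exact Le.e_prime n h1 e v hv
    · exact Le.node_dprime (n+1) h1 e
  · intro b hb
    have ha : Le k b (Elt.prime n _ v) := hb (Set.mem_insert _ _)
    have hc : Le k b (Elt.dprime (n+1) h1 e) := hb (Set.mem_insert_of_mem _ rfl)
    rcases inv_le_dprime hc with rfl | rfl | ⟨h2, f, hf, rfl⟩ | ⟨hk, rfl⟩
    · rcases inv_le_prime ha with h | h | ⟨h2, f, hf, h⟩ | ⟨_, h⟩ <;>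
        first
        | (exfalso; injection h with h'; omega)
        | simp_all
    · exact Le.refl _
    · rcases inv_le_prime ha with h | h | ⟨h2', f', hf', h⟩ | ⟨_, h⟩ <;>
        first
        | (exfalso; injection h with h'; omega)
        | simp_all
    · rcases inv_le_prime ha with h | h | ⟨h2, f, hf, h⟩ | ⟨hk', h⟩ <;>
        first
        | (exfalso; omega)
        | simp_all
        | (exfalso; injection h with h'; omega)

lemma glb_prime_prime_q {k : ℕ} {x y : N k} (hxy : x ≠ y) :
    IsGLB {Elt.prime k le_rfl x, Elt.prime k le_rfl y} (Elt.q : Elt k) := by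
  constructor
  · rintro c (rfl | rfl)
    · exact Le.q_prime x
    · exact Le.q_prime y
  · intro b hb
    have ha : Le k b (Elt.prime k le_rfl x) := hb (Set.mem_insert _ _)
    have hc : Le k b (Elt.prime k le_rfl y) := hb (Set.mem_insert_of_mem _ rfl)
    rcases inv_le_prime ha with rfl | rfl | ⟨h2, f, hf, rfl⟩ | ⟨hk, rfl⟩
    · rcases inv_le_prime hc with h | h | ⟨h2, f, hf, h⟩ | ⟨_, h⟩
      · exact absurd (prime_inj h) hxy
      · simp_all
      · simp_all
      · simp_all
    · rcases inv_le_prime hc with h | h | ⟨h2, f, hf, h⟩ | ⟨_, h⟩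
      · simp_all
      · exact absurd (node_inj h) hxy
      · exfalso; injection h with h'; omega
      · simp_all
    · omega
    · exact Le.refl _

lemma lub_node0 {k : ℕ} {h0 : 0 ≤ k} {x y : N 0} (hxy : x ≠ y) :
    IsLUB {Elt.node 0 h0 x, Elt.node 0 h0 y} (Elt.p : Elt k) := by
  constructor
  · rintro c (rfl | rfl)
    · exact Le.node_p h0 x
    · exact Le.node_p h0 y
  · intro b hb
    have ha : Le k (Elt.node 0 h0 x) b := hb (Set.mem_insert _ _)
    have hc : Le k (Elt.node 0 h0 y) b := hb (Set.mem_insert_of_mem _ rfl)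
    rcases inv_node0_le ha with rfl | rfl | rfl | rfl
    · rcases inv_node0_le hc with h | h | h | h
      · exact absurd (node_inj h) hxy
      · simp_all
      · simp_all
      · simp_all
    · exact Le.refl _
    · rcases inv_node0_le hc with h | h | h | h <;> first | simp_all | (exact absurd (prime_inj h.symm) (Ne.symm hxy))
    · rcases inv_node0_le hc with h | h | h | h <;> simp_all
lemma mkE_eq_iff {n : ℕ} {a b c d : N n} {h1 : a ≠ b} {h2 : c ≠ d} :
    mkE a b h1 = mkE c d h2 ↔ (a = c ∧ b = d) ∨ (a = d ∧ b = c) := by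
  rw [mkE, mkE]
  exact Subtype.mk_eq_mk.trans Sym2.eq_iff

/-- For every `k` and all cardinals `m, n` with `3 ≤ m, n ≤ ω`, the poset
`P_k` is not `(m,n)`-representable. -/
theorem statement12 (k : ℕ) (m n : Cardinal.{0})
    (hm3 : 3 ≤ m) (hmω : m ≤ ℵ₀) (hn3 : 3 ≤ n) (hnω : n ≤ ℵ₀) :
    ¬IsRepresentable m n (Elt k) := by
  rintro ⟨X, F, h, hF, hmem, hinj, hmeet, hjoin⟩
  have meet2 : ∀ u v a : Elt k, IsGLB {u, v} a → h a = h u ∩ h v := by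
    intro u v a hg
    rw [hmeet _ (mk_pair_lt u v hm3) a hg, Set.biInter_pair]
  have join2 : ∀ u v a : Elt k, IsLUB {u, v} a → h a = h u ∪ h v := by
    intro u v a hg
    rw [hjoin _ (mk_pair_lt u v hn3) a hg, Set.biUnion_pair]
  have mono : ∀ {u v : Elt k}, Le k u v → h u ⊆ h v := by
    intro u v huv
    rw [meet2 u v u (isGLB_pair_of_le huv)]
    exact Set.inter_subset_right
  have key : ∀ t, t ∈ h Elt.p → ∀ w : N 0, t ∈ h (Elt.node 0 (Nat.zero_le k) w) := by
    intro t ht w0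
    by_contra hw0
    have main : ∀ n' (hn : n' ≤ k), ∃ x y z w : N n',
        x ≠ y ∧ x ≠ z ∧ x ≠ w ∧ y ≠ z ∧ y ≠ w ∧ z ≠ w ∧
        t ∈ h (Elt.node n' hn x) ∧ t ∈ h (Elt.node n' hn y) ∧ t ∈ h (Elt.node n' hn z) ∧
        t ∉ h (Elt.prime n' hn w) ∧ t ∉ h (Elt.dprime n' hn w) := by
      intro n'
      induction n' with
      | zero =>
        intro hn
        have hex : ∀ w : Fin 4, ∃ x y z : Fin 4,
            x ≠ y ∧ x ≠ z ∧ x ≠ w ∧ y ≠ z ∧ y ≠ w ∧ z ≠ w := by decide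
        obtain ⟨x, y, z, hxy, hxz, hxw, hyz, hyw, hzw⟩ := hex w0
        have hmem' : ∀ v : N 0, v ≠ w0 → t ∈ h (Elt.node 0 hn v) := by
          intro v hv
          have := join2 _ _ _ (lub_node0 (k := k) (h0 := hn) hv)
          rw [this] at ht
          rcases ht with ht | ht
          · exact ht
          · exact absurd ht hw0
        refine ⟨x, y, z, w0, hxy, hxz, hxw, hyz, hyw, hzw, hmem' x hxw, hmem' y hyw,
          hmem' z hzw, ?_, ?_⟩
        · intro hcon
          apply hw0
          rw [meet2 _ _ _ (glb_p_prime hn w0)]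
          exact ⟨ht, hcon⟩
        · intro hcon
          apply hw0
          rw [meet2 _ _ _ (glb_p_dprime hn w0)]
          exact ⟨ht, hcon⟩
      | succ n' ih =>
        intro hn1
        obtain ⟨x, y, z, w, hxy, hxz, hxw, hyz, hyw, hzw, hx, hy, hz, hpw, hdw⟩ :=
          ih (Nat.le_of_succ_le hn1)
        have hpx : t ∈ h (Elt.prime n' (Nat.le_of_succ_le hn1) x) :=
          mono (Le.node_prime _ _ _) hx
        have hpy : t ∈ h (Elt.prime n' (Nat.le_of_succ_le hn1) y) :=
          mono (Le.node_prime _ _ _) hy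
        have hpz : t ∈ h (Elt.prime n' (Nat.le_of_succ_le hn1) z) :=
          mono (Le.node_prime _ _ _) hz
        have hmk : ∀ (u v : N n') (huv : u ≠ v),
            t ∈ h (Elt.prime n' (Nat.le_of_succ_le hn1) u) →
            t ∈ h (Elt.prime n' (Nat.le_of_succ_le hn1) v) →
            t ∈ h (Elt.node (n'+1) hn1 (mkE u v huv)) := by
          intro u v huv hu hv
          rw [meet2 _ _ _ (glb_prime_prime_e hn1 huv)]
          exact ⟨hu, hv⟩
        refine ⟨mkE x y hxy, mkE x z hxz, mkE y z hyz, mkE x w hxw,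
          ?_, ?_, ?_, ?_, ?_, ?_,
          hmk x y hxy hpx hpy, hmk x z hxz hpx hpz, hmk y z hyz hpy hpz, ?_, ?_⟩
        · rw [Ne, mkE_eq_iff]; tauto
        · rw [Ne, mkE_eq_iff]; tauto
        · rw [Ne, mkE_eq_iff]; tauto
        · rw [Ne, mkE_eq_iff]; tauto
        · rw [Ne, mkE_eq_iff]; tauto
        · rw [Ne, mkE_eq_iff]; tauto
        · intro hcon
          have h1 : t ∈ h (Elt.node (n'+1) hn1 (mkE x w hxw)) := by
            rw [meet2 _ _ _ (glb_prime_eprime hn1 (mem_mkE_left x w hxw))]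
            exact ⟨hpx, hcon⟩
          apply hpw
          have := meet2 _ _ _ (glb_prime_prime_e (x := x) (y := w) hn1 hxw)
          rw [this] at h1
          exact h1.2
        · intro hcon
          have h1 : t ∈ h (Elt.node (n'+1) hn1 (mkE x w hxw)) := by
            rw [meet2 _ _ _ (glb_prime_edprime hn1 (mem_mkE_left x w hxw))]
            exact ⟨hpx, hcon⟩
          apply hpw
          have := meet2 _ _ _ (glb_prime_prime_e (x := x) (y := w) hn1 hxw)
          rw [this] at h1
          exact h1.2
    obtain ⟨x, y, z, w, hxy, _, _, _, _, _, hx, hy, _, hpw, _⟩ := main k le_rfl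
    have hq : t ∈ h (Elt.q : Elt k) := by
      rw [meet2 _ _ _ (glb_prime_prime_q hxy)]
      exact ⟨mono (Le.node_prime _ _ _) hx, mono (Le.node_prime _ _ _) hy⟩
    exact hpw (mono (Le.q_prime w) hq)
  have hpa : ∀ x : N 0, h (Elt.node 0 (Nat.zero_le k) x) = h (Elt.p : Elt k) := by
    intro x
    exact Set.Subset.antisymm (mono (Le.node_p _ x)) (fun t ht => key t ht x)
  have heq : (Elt.node 0 (Nat.zero_le k) ((0 : Fin 4) : N 0) : Elt k)
      = Elt.node 0 (Nat.zero_le k) ((1 : Fin 4) : N 0) :=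
    hinj ((hpa _).trans (hpa _).symm)
  have h01 : ((0 : Fin 4) : N 0) = ((1 : Fin 4) : N 0) := node_inj heq
  exact absurd h01 (by decide)
end

section
/- Let U be a non-principal ultrafilter on ω and consider the ultraproduct ∏_U P_i of the posets P_0, P_1, P_2, .... Let k ∈ ω, let x ∈ P_k \ {q}, and let [y] ∈ ∏_U P_i. Then [x̄] < [y] if and only if one of the following holds: (1) x ∈ N_0 and [y] = [p̄]; (2) x ∈ N_n for some n and [y] ∈ {[x̄'], [x̄'']}; or (3) x = e_{uv} ∈ N_{n+1} for some u, v ∈ N_n and [y] ∈ {[ū'], [ū''], [v̄'], [v̄'']}. -/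
open Cardinal

universe u

/-- The setoid on `∀ i, P i` identifying functions that agree on a set belonging to `U`. -/
def upSetoid {ι : Type u} (U : Ultrafilter ι) (P : ι → Type u) : Setoid (∀ i, P i) where
  r x y := {i | x i = y i} ∈ U
  iseqv := by
    refine ⟨fun x => by
        rw [show {i | x i = x i} = Set.univ by simp]; exact Filter.univ_mem,
      fun {x y} h => ?_, fun {x y z} h1 h2 => ?_⟩
    · exact Filter.mem_of_superset h fun i hi => hi.symm
    · filter_upwards [h1, h2] with i hi1 hi2 using hi1.trans hi2

/-- The ultraproduct of the family `P` of posets over the ultrafilter `U`. -/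
def UProd {ι : Type u} (U : Ultrafilter ι) (P : ι → Type u) : Type u :=
  Quotient (upSetoid U P)

instance uprodPartialOrder {ι : Type u} (U : Ultrafilter ι) (P : ι → Type u)
    [∀ i, PartialOrder (P i)] : PartialOrder (UProd U P) where
  le := Quotient.lift₂ (fun x y => {i | x i ≤ y i} ∈ U) (by
    intro a₁ b₁ a₂ b₂ h₁ h₂
    apply propext
    constructor <;> intro h
    · filter_upwards [h, h₁, h₂] with i hle he1 he2
      rw [← he1, ← he2]; exact hle
    · filter_upwards [h, h₁, h₂] with i hle he1 he2
      rw [he1, he2]; exact hle)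
  le_refl := by
    rintro ⟨x⟩
    show {i | x i ≤ x i} ∈ U
    rw [show {i | x i ≤ x i} = Set.univ by simp]
    exact Filter.univ_mem
  le_trans := by
    rintro ⟨x⟩ ⟨y⟩ ⟨z⟩ h1 h2
    show {i | x i ≤ z i} ∈ U
    filter_upwards [(h1 : {i | x i ≤ y i} ∈ U), (h2 : {i | y i ≤ z i} ∈ U)] with i u1 u2
      using le_trans u1 u2
  le_antisymm := by
    rintro ⟨x⟩ ⟨y⟩ h1 h2
    apply Quotient.sound
    show {i | x i = y i} ∈ U
    filter_upwards [(h1 : {i | x i ≤ y i} ∈ U), (h2 : {i | y i ≤ x i} ∈ U)] with i u1 u2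
      using le_antisymm u1 u2

/-- `v` is a member of (the copy of) `N_n` inside `P_k`. -/
def inN (k n : ℕ) (v : Elt k) : Prop := ∃ (hn : n ≤ k) (w : N n), v = Elt.node n hn w

/-- `v` is a member of (the copy of) `N̂_n` inside `P_k`. -/
def inNhat (k n : ℕ) (v : Elt k) : Prop :=
  ∃ (hn : n ≤ k) (w : N n), v = Elt.prime n hn w ∨ v = Elt.dprime n hn w

/-- The canonical embedding of `P_k` into `P_l` for `k ≤ l`. -/
def emb {k l : ℕ} (h : k ≤ l) : Elt k → Elt l
  | .p => .p
  | .q => .q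
  | .node n hn w => .node n (hn.trans h) w
  | .prime n hn w => .prime n (hn.trans h) w
  | .dprime n hn w => .dprime n (hn.trans h) w

/-- For `x ∈ P_k`, the sequence `x̄` whose `i`-th term, for `i ≥ k`, is the image of `x`
in `P_i` under the canonical embeddings (terms below `k` are irrelevant modulo a
non-principal ultrafilter). -/
def bar (k : ℕ) (x : Elt k) : ∀ i : ℕ, Elt i := fun i =>
  if h : k ≤ i then emb h x else Elt.p

/-- The element `[x̄]` of the ultraproduct `∏_U P_i` determined by `x ∈ P_k`. -/
def cls (U : Ultrafilter ℕ) {k : ℕ} (x : Elt k) : UProd U Elt :=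
  Quotient.mk (upSetoid U Elt) (bar k x)

lemma mem_ge_ultra (U : Ultrafilter ℕ) (hU : ∀ i : ℕ, U ≠ pure i) (k : ℕ) :
    {i : ℕ | k ≤ i} ∈ U := by
  by_contra h
  have h2 : {i : ℕ | k ≤ i}ᶜ ∈ U := Ultrafilter.compl_mem_iff_notMem.2 h
  have hfin : ({i : ℕ | k ≤ i}ᶜ).Finite := by
    have : {i : ℕ | k ≤ i}ᶜ = Set.Iio k := by ext i; simp only [Set.mem_compl_iff, Set.mem_setOf_eq, Set.mem_Iio, Nat.not_le]
    rw [this]; exact Set.finite_Iio k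
  obtain ⟨a, _, ha⟩ := Ultrafilter.eq_pure_of_finite_mem hfin h2
  exact hU a ha

lemma emb_mono {k l : ℕ} (h : k ≤ l) {x y : Elt k} (hq : x ≠ Elt.q) (hxy : Le k x y) :
    Le l (emb h x) (emb h y) := by
  cases hxy with
  | refl => exact Le.refl _
  | node_p h0 w => exact Le.node_p (Nat.zero_le l) w
  | node_prime n hn w => exact Le.node_prime n (hn.trans h) w
  | node_dprime n hn w => exact Le.node_dprime n (hn.trans h) w
  | e_prime n hn e w hw => exact Le.e_prime n (hn.trans h) e w hw
  | e_dprime n hn e w hw => exact Le.e_dprime n (hn.trans h) e w hw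
  | q_prime w => exact absurd rfl hq
  | q_dprime w => exact absurd rfl hq

lemma emb_inj {k l : ℕ} (h : k ≤ l) : Function.Injective (emb h) := by
  intro x y hxy
  cases x <;> cases y <;> simp_all [emb]

lemma Le.p_cases {k : ℕ} {z : Elt k} (h : Le k Elt.p z) : z = Elt.p := by
  cases h; rfl

lemma Le.prime_cases {k n : ℕ} {hn : n ≤ k} {w : N n} {z : Elt k}
    (h : Le k (Elt.prime n hn w) z) : z = Elt.prime n hn w := by
  cases h; rfl

lemma Le.dprime_cases {k n : ℕ} {hn : n ≤ k} {w : N n} {z : Elt k}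
    (h : Le k (Elt.dprime n hn w) z) : z = Elt.dprime n hn w := by
  cases h; rfl

lemma Le.node0_cases {k : ℕ} {h0 : 0 ≤ k} {w : N 0} {z : Elt k}
    (h : Le k (Elt.node 0 h0 w) z) :
    z = Elt.node 0 h0 w ∨ z = Elt.p ∨ z = Elt.prime 0 h0 w ∨ z = Elt.dprime 0 h0 w := by
  cases h with
  | refl => exact Or.inl rfl
  | node_p => exact Or.inr (Or.inl rfl)
  | node_prime => exact Or.inr (Or.inr (Or.inl rfl))
  | node_dprime => exact Or.inr (Or.inr (Or.inr rfl))

lemma Le.nodeSucc_cases {k m : ℕ} {hm : m + 1 ≤ k} {u v : N m}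
    {hd : ¬(s(u, v) : Sym2 (N m)).IsDiag} {z : Elt k}
    (h : Le k (Elt.node (m + 1) hm ⟨s(u, v), hd⟩) z) :
    z = Elt.node (m + 1) hm ⟨s(u, v), hd⟩ ∨
    z = Elt.prime (m + 1) hm ⟨s(u, v), hd⟩ ∨
    z = Elt.dprime (m + 1) hm ⟨s(u, v), hd⟩ ∨
    z = Elt.prime m (Nat.le_of_succ_le hm) u ∨
    z = Elt.dprime m (Nat.le_of_succ_le hm) u ∨
    z = Elt.prime m (Nat.le_of_succ_le hm) v ∨
    z = Elt.dprime m (Nat.le_of_succ_le hm) v := by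
  cases h with
  | refl => exact Or.inl rfl
  | node_prime => exact Or.inr (Or.inl rfl)
  | node_dprime => exact Or.inr (Or.inr (Or.inl rfl))
  | e_prime _ _ _ x hx =>
    rcases Sym2.mem_iff.1 hx with rfl | rfl
    · exact Or.inr (Or.inr (Or.inr (Or.inl rfl)))
    · exact Or.inr (Or.inr (Or.inr (Or.inr (Or.inr (Or.inl rfl)))))
  | e_dprime _ _ _ x hx =>
    rcases Sym2.mem_iff.1 hx with rfl | rfl
    · exact Or.inr (Or.inr (Or.inr (Or.inr (Or.inl rfl))))
    · exact Or.inr (Or.inr (Or.inr (Or.inr (Or.inr (Or.inr rfl)))))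

lemma cls_lt_cls (U : Ultrafilter ℕ) (hU : ∀ i : ℕ, U ≠ pure i) {k : ℕ} {x c : Elt k}
    (hq : x ≠ Elt.q) (hle : Le k x c) (hne : x ≠ c) : cls U x < cls U c := by
  rw [lt_iff_le_and_ne]
  constructor
  · show {i | bar k x i ≤ bar k c i} ∈ U
    filter_upwards [mem_ge_ultra U hU k] with i hi
    simp only [bar, dif_pos hi]
    exact emb_mono hi hq hle
  · intro hcon
    have hmem : {i | bar k x i = bar k c i} ∈ U := Quotient.exact hcon
    obtain ⟨i, hi1, hi2⟩ := Ultrafilter.nonempty_of_mem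
      (Filter.inter_mem hmem (mem_ge_ultra U hU k))
    have hk : k ≤ i := hi2
    simp only [Set.mem_setOf_eq, bar, hk, dite_true] at hi1
    exact hne (emb_inj hk hi1)

/-- Characterization of the elements of the ultraproduct `∏_U P_i` lying
strictly above `[x̄]` for `x ∈ P_k \ {q}`. -/
theorem statement13 (U : Ultrafilter ℕ) (hU : ∀ i : ℕ, U ≠ pure i)
    (k : ℕ) (x : Elt k) (hx : x ≠ Elt.q) (y : ∀ i : ℕ, Elt i) :
    cls U x < Quotient.mk (upSetoid U Elt) y ↔
      ((inN k 0 x ∧ Quotient.mk (upSetoid U Elt) y = cls U (Elt.p : Elt k)) ∨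
       (∃ (n : ℕ) (hn : n ≤ k) (w : N n), x = Elt.node n hn w ∧
         (Quotient.mk (upSetoid U Elt) y = cls U (Elt.prime n hn w) ∨
          Quotient.mk (upSetoid U Elt) y = cls U (Elt.dprime n hn w))) ∨
       (∃ (n : ℕ) (hn : n + 1 ≤ k) (u v : N n) (huv : u ≠ v),
         x = Elt.node (n + 1) hn (mkE u v huv) ∧
         (Quotient.mk (upSetoid U Elt) y = cls U (Elt.prime n (Nat.le_of_succ_le hn) u) ∨
          Quotient.mk (upSetoid U Elt) y = cls U (Elt.dprime n (Nat.le_of_succ_le hn) u) ∨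
          Quotient.mk (upSetoid U Elt) y = cls U (Elt.prime n (Nat.le_of_succ_le hn) v) ∨
          Quotient.mk (upSetoid U Elt) y = cls U (Elt.dprime n (Nat.le_of_succ_le hn) v)))) := by
  constructor
  · intro hlt
    replace hlt := lt_iff_le_and_ne.mp hlt
    obtain ⟨hle, hne⟩ := hlt
    have hle' : {i | bar k x i ≤ y i} ∈ U := hle
    have hne' : {i | bar k x i = y i} ∉ U := fun h => hne (Quotient.sound h)
    have hS : ({i : ℕ | k ≤ i} ∩ {i | bar k x i ≤ y i}) ∈ U :=
      Filter.inter_mem (mem_ge_ultra U hU k) hle'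
    cases x with
    | p =>
      refine absurd (Filter.mem_of_superset hS fun i hi => ?_) hne'
      have hk : k ≤ i := hi.1
      have hlei : bar k Elt.p i ≤ y i := hi.2
      simp only [Set.mem_setOf_eq, bar, hk, dite_true] at hlei ⊢
      exact (Le.p_cases hlei).symm
    | q => exact absurd rfl hx
    | prime n hn w =>
      refine absurd (Filter.mem_of_superset hS fun i hi => ?_) hne'
      have hk : k ≤ i := hi.1
      have hlei : bar k (Elt.prime n hn w) i ≤ y i := hi.2
      simp only [Set.mem_setOf_eq, bar, hk, dite_true] at hlei ⊢
      exact (Le.prime_cases hlei).symm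
    | dprime n hn w =>
      refine absurd (Filter.mem_of_superset hS fun i hi => ?_) hne'
      have hk : k ≤ i := hi.1
      have hlei : bar k (Elt.dprime n hn w) i ≤ y i := hi.2
      simp only [Set.mem_setOf_eq, bar, hk, dite_true] at hlei ⊢
      exact (Le.dprime_cases hlei).symm
    | node n hn w =>
      match n, hn, w, hS, hne' with
      | 0, hn, w, hS, hne' =>
        have hsub : {i : ℕ | k ≤ i} ∩ {i | bar k (Elt.node 0 hn w) i ≤ y i} ⊆
            {i | bar k (Elt.node 0 hn w) i = y i} ∪
            ({i | y i = bar k (Elt.p : Elt k) i} ∪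
            ({i | y i = bar k (Elt.prime 0 hn w) i} ∪
             {i | y i = bar k (Elt.dprime 0 hn w) i})) := by
          intro i hi
          have hk : k ≤ i := hi.1
          have hlei : bar k (Elt.node 0 hn w) i ≤ y i := hi.2
          simp only [bar, hk, dite_true] at hlei
          simp only [Set.mem_union, Set.mem_setOf_eq, bar, hk, dite_true]
          rcases Le.node0_cases hlei with h | h | h | h
          · exact Or.inl h.symm
          · exact Or.inr (Or.inl h)
          · exact Or.inr (Or.inr (Or.inl h))
          · exact Or.inr (Or.inr (Or.inr h))
        have hmem := Filter.mem_of_superset hS hsub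
        rcases Ultrafilter.union_mem_iff.mp hmem with h | hmem
        · exact absurd h hne'
        rcases Ultrafilter.union_mem_iff.mp hmem with h | hmem
        · exact Or.inl ⟨⟨hn, w, rfl⟩, Quotient.sound h⟩
        rcases Ultrafilter.union_mem_iff.mp hmem with h | h
        · exact Or.inr (Or.inl ⟨0, hn, w, rfl, Or.inl (Quotient.sound h)⟩)
        · exact Or.inr (Or.inl ⟨0, hn, w, rfl, Or.inr (Quotient.sound h)⟩)
      | (m + 1), hn, w, hS, hne' =>
        have hw : ∃ (u v : N m) (hd : ¬(s(u, v) : Sym2 (N m)).IsDiag),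
            w = ⟨s(u, v), hd⟩ := by
          obtain ⟨s, hd⟩ := w
          induction s using Sym2.ind with
          | _ u v => exact ⟨u, v, hd, rfl⟩
        obtain ⟨u, v, hd, rfl⟩ := hw
        have huv : u ≠ v := fun h => hd (by simp [h])
        have hsub : {i : ℕ | k ≤ i} ∩
            {i | bar k (Elt.node (m + 1) hn ⟨s(u, v), hd⟩) i ≤ y i} ⊆
            {i | bar k (Elt.node (m + 1) hn ⟨s(u, v), hd⟩) i = y i} ∪
            ({i | y i = bar k (Elt.prime (m + 1) hn ⟨s(u, v), hd⟩) i} ∪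
            ({i | y i = bar k (Elt.dprime (m + 1) hn ⟨s(u, v), hd⟩) i} ∪
            ({i | y i = bar k (Elt.prime m (Nat.le_of_succ_le hn) u) i} ∪
            ({i | y i = bar k (Elt.dprime m (Nat.le_of_succ_le hn) u) i} ∪
            ({i | y i = bar k (Elt.prime m (Nat.le_of_succ_le hn) v) i} ∪
             {i | y i = bar k (Elt.dprime m (Nat.le_of_succ_le hn) v) i}))))) := by
          intro i hi
          have hk : k ≤ i := hi.1
          have hlei : bar k (Elt.node (m + 1) hn ⟨s(u, v), hd⟩) i ≤ y i := hi.2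
          simp only [bar, hk, dite_true] at hlei
          simp only [Set.mem_union, Set.mem_setOf_eq, bar, hk, dite_true]
          rcases Le.nodeSucc_cases hlei with h | h | h | h | h | h | h
          · exact Or.inl h.symm
          · exact Or.inr (Or.inl h)
          · exact Or.inr (Or.inr (Or.inl h))
          · exact Or.inr (Or.inr (Or.inr (Or.inl h)))
          · exact Or.inr (Or.inr (Or.inr (Or.inr (Or.inl h))))
          · exact Or.inr (Or.inr (Or.inr (Or.inr (Or.inr (Or.inl h)))))
          · exact Or.inr (Or.inr (Or.inr (Or.inr (Or.inr (Or.inr h)))))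
        have hmem := Filter.mem_of_superset hS hsub
        rcases Ultrafilter.union_mem_iff.mp hmem with h | hmem
        · exact absurd h hne'
        rcases Ultrafilter.union_mem_iff.mp hmem with h | hmem
        · exact Or.inr (Or.inl ⟨m + 1, hn, ⟨s(u, v), hd⟩, rfl,
            Or.inl (Quotient.sound h)⟩)
        rcases Ultrafilter.union_mem_iff.mp hmem with h | hmem
        · exact Or.inr (Or.inl ⟨m + 1, hn, ⟨s(u, v), hd⟩, rfl,
            Or.inr (Quotient.sound h)⟩)
        rcases Ultrafilter.union_mem_iff.mp hmem with h | hmem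
        · exact Or.inr (Or.inr ⟨m, hn, u, v, huv, rfl,
            Or.inl (Quotient.sound h)⟩)
        rcases Ultrafilter.union_mem_iff.mp hmem with h | hmem
        · exact Or.inr (Or.inr ⟨m, hn, u, v, huv, rfl,
            Or.inr (Or.inl (Quotient.sound h))⟩)
        rcases Ultrafilter.union_mem_iff.mp hmem with h | h
        · exact Or.inr (Or.inr ⟨m, hn, u, v, huv, rfl,
            Or.inr (Or.inr (Or.inl (Quotient.sound h)))⟩)
        · exact Or.inr (Or.inr ⟨m, hn, u, v, huv, rfl,
            Or.inr (Or.inr (Or.inr (Quotient.sound h)))⟩)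
  · rintro (⟨⟨h0, w, rfl⟩, hy⟩ | ⟨n, hn, w, rfl, hy | hy⟩ |
      ⟨n, hn, u, v, huv, rfl, hy | hy | hy | hy⟩)
    · rw [hy]; exact cls_lt_cls U hU (by simp) (Le.node_p h0 w) (by simp)
    · rw [hy]; exact cls_lt_cls U hU (by simp) (Le.node_prime n hn w) (by simp)
    · rw [hy]; exact cls_lt_cls U hU (by simp) (Le.node_dprime n hn w) (by simp)
    · rw [hy]
      exact cls_lt_cls U hU (by simp)
        (Le.e_prime n hn (mkE u v huv) u (by simp [mkE])) (by simp)
    · rw [hy]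
      exact cls_lt_cls U hU (by simp)
        (Le.e_dprime n hn (mkE u v huv) u (by simp [mkE])) (by simp)
    · rw [hy]
      exact cls_lt_cls U hU (by simp)
        (Le.e_prime n hn (mkE u v huv) v (by simp [mkE])) (by simp)
    · rw [hy]
      exact cls_lt_cls U hU (by simp)
        (Le.e_dprime n hn (mkE u v huv) v (by simp [mkE])) (by simp)
end
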